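/- There exists a universal constant C > 0 such that for every C¹ function γ : ℝ × (0,∞) → ℝ with A := sup_{t∈ℝ} (∫₀^∞ ((∂ᵣγ(t,r))² + (∂ₜγ(t,r))²) r dr)^{1/2} < ∞, and for all times s, t ∈ ℝ and radii 0 < q < r, one has |γ(t,r) − γ(s,q)|² ≤ C · ( ln(r/q) + (t−s)²/(q(r−q)) ) · A². -/

import Mathlib

open MeasureTheory Filter Topology Set
open scoped ENNReal

noncomputable section

/-- `G(x) = ∫₀ˣ |g(y)| dy`. -/
def Gfun (g : ℝ → ℝ) (x : ℝ) : ℝ := ∫ y in (0:ℝ)..x, |g y|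

/-- Assumption (A1): `G(x) → ±∞` as `x → ±∞`. -/
def A1 (g : ℝ → ℝ) : Prop := Tendsto (Gfun g) atTop atTop ∧ Tendsto (Gfun g) atBot atBot

/-- Assumption (A2): the zero set `𝒱` of `g` is discrete. -/
def A2 (g : ℝ → ℝ) : Prop :=
  ∀ ℓ : ℝ, g ℓ = 0 → ∃ ε > 0, ∀ x : ℝ, g x = 0 → |x - ℓ| < ε → x = ℓ

/-- Assumption (A3): `g'(ℓ) ∈ {−1,1}` for every zero `ℓ` of `g`. -/
def A3 (g : ℝ → ℝ) : Prop := ∀ ℓ : ℝ, g ℓ = 0 → deriv g ℓ = 1 ∨ deriv g ℓ = -1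

/-- Time derivative `∂ₜψ(t,r)`. -/
def pdt (ψ : ℝ → ℝ → ℝ) (t r : ℝ) : ℝ := deriv (fun s => ψ s r) t
/-- Radial derivative `∂ᵣψ(t,r)`. -/
def pdr (ψ : ℝ → ℝ → ℝ) (t r : ℝ) : ℝ := deriv (fun ρ => ψ t ρ) r
/-- Second time derivative `∂ₜₜψ(t,r)`. -/
def pdtt (ψ : ℝ → ℝ → ℝ) (t r : ℝ) : ℝ := deriv (fun s => pdt ψ s r) t
/-- Second radial derivative `∂ᵣᵣψ(t,r)`. -/
def pdrr (ψ : ℝ → ℝ → ℝ) (t r : ℝ) : ℝ := deriv (fun ρ => pdr ψ t ρ) r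

/-- Energy of a pair `(φ₀, φ₁)` on a set `s ⊆ (0,∞)` of radii:
`∫_s (φ₁² + (∂ᵣφ₀)² + g(φ₀)²/r²) r dr`. -/
def energyOn (g : ℝ → ℝ) (φ₀ φ₁ : ℝ → ℝ) (s : Set ℝ) : ℝ≥0∞ :=
  ∫⁻ r in s, ENNReal.ofReal (((φ₁ r)^2 + (deriv φ₀ r)^2 + (g (φ₀ r))^2 / r^2) * r)

/-- Squared `H × L²` norm of a pair `(φ₀, φ₁)` on a set `s ⊆ (0,∞)` of radii:
`∫_s (φ₁² + (∂ᵣφ₀)² + φ₀²/r²) r dr`. -/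
def HLnormSqOn (φ₀ φ₁ : ℝ → ℝ) (s : Set ℝ) : ℝ≥0∞ :=
  ∫⁻ r in s, ENNReal.ofReal (((φ₁ r)^2 + (deriv φ₀ r)^2 + (φ₀ r)^2 / r^2) * r)

/-- Squared `H` norm of a single function on a set `s ⊆ (0,∞)` of radii. -/
def HnormSqOn (φ : ℝ → ℝ) (s : Set ℝ) : ℝ≥0∞ :=
  ∫⁻ r in s, ENNReal.ofReal (((deriv φ r)^2 + (φ r)^2 / r^2) * r)

/-- `ψ` is a classical solution of the equivariant wave map equation (WM) on `I × (0,∞)`. -/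
def IsWaveMapOn (g : ℝ → ℝ) (ψ : ℝ → ℝ → ℝ) (I : Set ℝ) : Prop :=
  ContDiffOn ℝ 2 (fun p : ℝ × ℝ => ψ p.1 p.2) (I ×ˢ Ioi (0:ℝ)) ∧
  ∀ t ∈ I, ∀ r ∈ Ioi (0:ℝ),
    pdtt ψ t r - pdrr ψ t r - pdr ψ t r / r + g (ψ t r) * deriv g (ψ t r) / r^2 = 0

/-- `φ` is a classical solution of the linearized equation (LW) with coefficient `k²` on
`I × (0,∞)`. -/
def IsLinWaveOn (k : ℝ) (φ : ℝ → ℝ → ℝ) (I : Set ℝ) : Prop :=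
  ContDiffOn ℝ 2 (fun p : ℝ × ℝ => φ p.1 p.2) (I ×ˢ Ioi (0:ℝ)) ∧
  ∀ t ∈ I, ∀ r ∈ Ioi (0:ℝ),
    pdtt φ t r - pdrr φ t r - pdr φ t r / r + k^2 * φ t r / r^2 = 0

/-- A finite-energy classical solution of the linearized equation (LW), defined for all times. -/
def IsFiniteEnergyLinWave (k : ℝ) (φ : ℝ → ℝ → ℝ) : Prop :=
  IsLinWaveOn k φ univ ∧ ∃ C : ℝ≥0∞, C < ⊤ ∧ ∀ t : ℝ, HLnormSqOn (φ t) (pdt φ t) (Ioi 0) ≤ C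

/-- A (possibly constant) harmonic map: a finite-energy `C²` solution of
`Q'' + Q'/r = f(Q)/r²` on `(0,∞)`, together with its limits at `r = 0` and `r = ∞`,
which belong to the zero set `𝒱` of `g`. -/
structure HarmonicMap (g : ℝ → ℝ) where
  Q : ℝ → ℝ
  Q0 : ℝ
  Qinf : ℝ
  smooth : ContDiffOn ℝ 2 Q (Ioi 0)
  eqn : ∀ r ∈ Ioi (0:ℝ), deriv (deriv Q) r + deriv Q r / r = g (Q r) * deriv g (Q r) / r^2
  finiteEnergy : energyOn g Q (fun _ => 0) (Ioi 0) < ⊤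
  lim_zero : Tendsto Q (𝓝[>] (0:ℝ)) (𝓝 Q0)
  lim_infty : Tendsto Q atTop (𝓝 Qinf)
  zero_mem : g Q0 = 0
  infty_mem : g Qinf = 0

/-- The interval `[r₁, r₂] ∩ (0,∞)`, where `r₂` may be `+∞` (an extended real). -/
def sIcc (r₁ : ℝ) (r₂ : EReal) : Set ℝ := {r : ℝ | r₁ ≤ r ∧ (r : EReal) ≤ r₂} ∩ Ioi 0

/-- The open interval `(r₁, r₂)`, where `r₂` may be `+∞` (an extended real). -/
def sIoo (r₁ : ℝ) (r₂ : EReal) : Set ℝ := {r : ℝ | r₁ < r ∧ (r : EReal) < r₂}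

/-- The filter of approach to the (possibly infinite) point `b` within the set `s ⊆ ℝ`. -/
def approach (s : Set ℝ) (b : EReal) : Filter ℝ :=
  Filter.comap (fun r : ℝ => (r : EReal)) (𝓝 b) ⊓ Filter.principal s

end

/-- Squared Cauchy–Schwarz for lower integrals. -/
lemma lint_cs {α : Type*} [MeasurableSpace α] (μ : Measure α) {f g : α → ℝ≥0∞}
    (hf : AEMeasurable f μ) (hg : AEMeasurable g μ) :
    (∫⁻ a, f a * g a ∂μ) ^ 2 ≤ (∫⁻ a, f a ^ 2 ∂μ) * (∫⁻ a, g a ^ 2 ∂μ) := by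
  have h := ENNReal.lintegral_mul_le_Lp_mul_Lq μ (p := 2) (q := 2)
    Real.HolderConjugate.two_two hf hg
  simp only [Pi.mul_apply] at h
  have h2 : ∀ x : ℝ≥0∞, x ^ (2:ℝ) = x ^ 2 := fun x => by
    rw [show (2:ℝ) = ((2:ℕ):ℝ) by norm_num, ENNReal.rpow_natCast]
  calc (∫⁻ a, f a * g a ∂μ) ^ 2
      ≤ ((∫⁻ a, f a ^ (2:ℝ) ∂μ) ^ (1/(2:ℝ)) * (∫⁻ a, g a ^ (2:ℝ) ∂μ) ^ (1/(2:ℝ))) ^ 2 := by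
        gcongr
    _ = (∫⁻ a, f a ^ 2 ∂μ) * (∫⁻ a, g a ^ 2 ∂μ) := by
        have h3 : ∀ x : ℝ≥0∞, (x ^ (1/(2:ℝ))) ^ 2 = x := fun x => by
          rw [← ENNReal.rpow_natCast (x ^ (1/(2:ℝ))) 2, ← ENNReal.rpow_mul]
          norm_num
        simp only [h2]
        rw [mul_pow, h3, h3]

/-- Weighted Cauchy–Schwarz for the integral of `|f|` on a set. -/
lemma sq_setIntegral_abs_le {s : Set ℝ} (hs : MeasurableSet s) {f w : ℝ → ℝ}
    (hfi : IntegrableOn f s) (hw : ∀ x ∈ s, 0 < w x)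
    (hfm : AEMeasurable f (volume.restrict s)) (hwm : AEMeasurable w (volume.restrict s)) :
    ENNReal.ofReal ((∫ x in s, |f x|) ^ 2)
      ≤ (∫⁻ x in s, ENNReal.ofReal ((f x) ^ 2 * w x)) * (∫⁻ x in s, ENNReal.ofReal (w x)⁻¹) := by
  have hfa : AEMeasurable (fun x => |f x|) (volume.restrict s) :=
    continuous_abs.measurable.comp_aemeasurable hfm
  have hws : AEMeasurable (fun x => Real.sqrt (w x)) (volume.restrict s) :=
    Real.continuous_sqrt.measurable.comp_aemeasurable hwm
  have hFm : AEMeasurable (fun x => ENNReal.ofReal (|f x| * Real.sqrt (w x)))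
      (volume.restrict s) := (hfa.mul hws).ennreal_ofReal
  have hGm : AEMeasurable (fun x => ENNReal.ofReal (Real.sqrt (w x))⁻¹)
      (volume.restrict s) := hws.inv.ennreal_ofReal
  have key : ENNReal.ofReal (∫ x in s, |f x|)
      = ∫⁻ x in s, ENNReal.ofReal (|f x| * Real.sqrt (w x))
          * ENNReal.ofReal (Real.sqrt (w x))⁻¹ := by
    rw [ofReal_integral_eq_lintegral_ofReal hfi.abs
      ((ae_restrict_iff' hs).2 (Filter.Eventually.of_forall fun x _ => abs_nonneg _))]
    refine lintegral_congr_ae (((ae_restrict_iff' hs).2 (Filter.Eventually.of_forall ?_)))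
    intro x hx
    have hsx : 0 < Real.sqrt (w x) := Real.sqrt_pos.2 (hw x hx)
    show ENNReal.ofReal |f x|
      = ENNReal.ofReal (|f x| * Real.sqrt (w x)) * ENNReal.ofReal (Real.sqrt (w x))⁻¹
    rw [← ENNReal.ofReal_mul (by positivity)]
    congr 1
    field_simp
  have hcs := lint_cs (volume.restrict s) hFm hGm
  rw [ENNReal.ofReal_pow (by positivity), key]
  refine hcs.trans (mul_le_mul' ?_ ?_)
  · refine lintegral_mono_ae ((ae_restrict_iff' hs).2 (Filter.Eventually.of_forall ?_))
    intro x hx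
    show ENNReal.ofReal (|f x| * Real.sqrt (w x)) ^ 2 ≤ ENNReal.ofReal ((f x) ^ 2 * w x)
    rw [← ENNReal.ofReal_pow (by positivity)]
    exact ENNReal.ofReal_le_ofReal
      (by rw [mul_pow, sq_abs, Real.sq_sqrt (hw x hx).le])
  · refine lintegral_mono_ae ((ae_restrict_iff' hs).2 (Filter.Eventually.of_forall ?_))
    intro x hx
    show ENNReal.ofReal (Real.sqrt (w x))⁻¹ ^ 2 ≤ ENNReal.ofReal (w x)⁻¹
    rw [← ENNReal.ofReal_pow (by positivity)]
    exact ENNReal.ofReal_le_ofReal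
      (by rw [inv_pow, Real.sq_sqrt (hw x hx).le])

set_option maxHeartbeats 2000000 in
/-- pointwise space-time oscillation estimate: there is a universal
constant `C > 0` such that any `C¹` function `γ` on `ℝ × (0,∞)` whose weighted space-time
gradient is uniformly bounded by `A` satisfies
`|γ(t,r) − γ(s,q)|² ≤ C (ln(r/q) + (t−s)²/(q(r−q))) A²` for all times `s,t` and radii
`0 < q < r`. -/
theorem oscillation_estimate :
    ∃ C > (0:ℝ), ∀ γ : ℝ → ℝ → ℝ,
      ContDiffOn ℝ 1 (fun p : ℝ × ℝ => γ p.1 p.2) (univ ×ˢ Ioi (0:ℝ)) →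
      ∀ A : ℝ,
      (∀ t : ℝ, (∫⁻ r in Ioi (0:ℝ),
          ENNReal.ofReal (((pdr γ t r)^2 + (pdt γ t r)^2) * r)) ≤ ENNReal.ofReal (A^2)) →
      ∀ s t q r : ℝ, 0 < q → q < r →
        (γ t r - γ s q)^2 ≤ C * (Real.log (r / q) + (t - s)^2 / (q * (r - q))) * A^2 := by
  refine ⟨6, by norm_num, ?_⟩
  intro γ hγ A hA s t q r hq hqr
  have hr : (0:ℝ) < r := hq.trans hqr
  have hrq : (0:ℝ) < r - q := sub_pos.2 hqr
  set L : ℝ := Real.log (r / q) with hL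
  have hL0 : 0 ≤ L := Real.log_nonneg ((one_le_div hq).2 hqr.le)
  set Y : ℝ := (t - s) ^ 2 / (q * (r - q)) with hY
  have hY0 : 0 ≤ Y := by positivity
  have hA2 : 0 ≤ A ^ 2 := sq_nonneg A
  -- differentiability setup
  set F : ℝ × ℝ → ℝ := fun p => γ p.1 p.2 with hFdef
  have hU : IsOpen ((univ : Set ℝ) ×ˢ Ioi (0:ℝ)) := isOpen_univ.prod isOpen_Ioi
  have hdiff : DifferentiableOn ℝ F (univ ×ˢ Ioi 0) := hγ.differentiableOn one_ne_zero
  have hcontD : ContinuousOn (fderiv ℝ F) (univ ×ˢ Ioi 0) :=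
    hγ.continuousOn_fderiv_of_isOpen hU le_rfl
  have hfd : ∀ p : ℝ × ℝ, 0 < p.2 → HasFDerivAt F (fderiv ℝ F p) p := fun p hp =>
    (hdiff.differentiableAt (hU.mem_nhds ⟨trivial, hp⟩)).hasFDerivAt
  have hpt' : ∀ τ ρ : ℝ, 0 < ρ → HasDerivAt (fun σ => γ σ ρ) (fderiv ℝ F (τ, ρ) (1, 0)) τ :=
    fun τ ρ hρ =>
      by exact (hfd (τ, ρ) hρ).comp_hasDerivAt τ (HasDerivAt.prodMk (hasDerivAt_id τ) (hasDerivAt_const τ ρ))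
  have hpr' : ∀ τ ρ : ℝ, 0 < ρ → HasDerivAt (fun x => γ τ x) (fderiv ℝ F (τ, ρ) (0, 1)) ρ :=
    fun τ ρ hρ =>
      by exact (hfd (τ, ρ) hρ).comp_hasDerivAt ρ (HasDerivAt.prodMk (hasDerivAt_const ρ τ) (hasDerivAt_id ρ))
  have hptD : ∀ τ ρ : ℝ, 0 < ρ → HasDerivAt (fun σ => γ σ ρ) (pdt γ τ ρ) τ := by
    intro τ ρ hρ
    have h := hpt' τ ρ hρ
    simpa only [pdt, h.deriv] using h
  have hprD : ∀ τ ρ : ℝ, 0 < ρ → HasDerivAt (fun x => γ τ x) (pdr γ τ ρ) ρ := by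
    intro τ ρ hρ
    have h := hpr' τ ρ hρ
    simpa only [pdr, h.deriv] using h
  have hptc : ContinuousOn (fun p : ℝ × ℝ => pdt γ p.1 p.2) (univ ×ˢ Ioi 0) := by
    have h1 : ContinuousOn (fun p : ℝ × ℝ => fderiv ℝ F p (1, 0)) (univ ×ˢ Ioi 0) :=
      hcontD.clm_apply continuousOn_const
    exact h1.congr fun p hp => (hpt' p.1 p.2 hp.2).deriv
  have hprc : ContinuousOn (fun p : ℝ × ℝ => pdr γ p.1 p.2) (univ ×ˢ Ioi 0) := by
    have h1 : ContinuousOn (fun p : ℝ × ℝ => fderiv ℝ F p (0, 1)) (univ ×ˢ Ioi 0) :=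
      hcontD.clm_apply continuousOn_const
    exact h1.congr fun p hp => (hpr' p.1 p.2 hp.2).deriv
  have hprc1 : ∀ τ : ℝ, ContinuousOn (fun x => pdr γ τ x) (Ioi 0) := fun τ =>
    hprc.comp ((continuous_const.prodMk continuous_id).continuousOn)
      (fun x hx => ⟨trivial, hx⟩)
  -- radial estimate
  have radial : ∀ (τ a b : ℝ), q ≤ a → a ≤ b → b ≤ r →
      (γ τ b - γ τ a) ^ 2 ≤ A ^ 2 * L := by
    intro τ a b hqa hab hbr
    have ha : 0 < a := lt_of_lt_of_le hq hqa
    have hb : 0 < b := lt_of_lt_of_le ha hab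
    have hIcc : Icc a b ⊆ Ioi 0 := fun x hx => lt_of_lt_of_le ha hx.1
    have hIoc : Ioc a b ⊆ Ioi (0:ℝ) := fun x hx => ha.trans hx.1
    have hc : ContinuousOn (fun x => pdr γ τ x) (Icc a b) := (hprc1 τ).mono hIcc
    have hint : IntervalIntegrable (fun x => pdr γ τ x) volume a b := by
      have h := hc
      rw [← uIcc_of_le hab] at h
      exact h.intervalIntegrable
    have hftc : ∫ x in a..b, pdr γ τ x = γ τ b - γ τ a := by
      apply intervalIntegral.integral_eq_sub_of_hasDerivAt
      · intro x hx
        rw [uIcc_of_le hab] at hx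
        exact hprD τ x (hIcc hx)
      · exact hint
    have habs : |γ τ b - γ τ a| ≤ ∫ x in Ioc a b, |pdr γ τ x| := by
      rw [← hftc, ← intervalIntegral.integral_of_le hab]
      exact intervalIntegral.abs_integral_le_integral_abs hab
    have hfiOn : IntegrableOn (fun x => pdr γ τ x) (Ioc a b) :=
      hc.integrableOn_Icc.mono_set Ioc_subset_Icc_self
    have hfm : AEMeasurable (fun x => pdr γ τ x) (volume.restrict (Ioc a b)) :=
      ((hprc1 τ).mono hIoc).aemeasurable measurableSet_Ioc
    have hCS := sq_setIntegral_abs_le (w := fun x => x) measurableSet_Ioc hfiOn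
      (fun x hx => ha.trans hx.1) hfm aemeasurable_id
    have h1 : (∫⁻ x in Ioc a b, ENNReal.ofReal ((pdr γ τ x) ^ 2 * x))
        ≤ ENNReal.ofReal (A ^ 2) := by
      refine le_trans (le_trans ?_ (lintegral_mono_set hIoc)) (hA τ)
      refine lintegral_mono_ae ((ae_restrict_iff' measurableSet_Ioc).2
        (Filter.Eventually.of_forall ?_))
      intro x hx
      have hx0 : 0 < x := ha.trans hx.1
      exact ENNReal.ofReal_le_ofReal (by nlinarith [sq_nonneg (pdt γ τ x)])
    have hinvint : IntegrableOn (fun x : ℝ => x⁻¹) (Ioc a b) := by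
      have hci : ContinuousOn (fun x : ℝ => x⁻¹) (Icc a b) :=
        continuousOn_inv₀.mono (fun x hx => ne_of_gt (lt_of_lt_of_le ha hx.1))
      exact hci.integrableOn_Icc.mono_set Ioc_subset_Icc_self
    have h2 : (∫⁻ x in Ioc a b, ENNReal.ofReal (x)⁻¹)
        = ENNReal.ofReal (Real.log (b / a)) := by
      rw [← ofReal_integral_eq_lintegral_ofReal hinvint
        ((ae_restrict_iff' measurableSet_Ioc).2 (Filter.Eventually.of_forall
          (fun x hx => inv_nonneg.2 (ha.trans hx.1).le)))]
      congr 1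
      rw [← intervalIntegral.integral_of_le hab]
      exact integral_inv_of_pos ha hb
    have hlog0 : 0 ≤ Real.log (b / a) := Real.log_nonneg ((one_le_div ha).2 hab)
    have hkey : ENNReal.ofReal ((∫ x in Ioc a b, |pdr γ τ x|) ^ 2)
        ≤ ENNReal.ofReal (A ^ 2 * Real.log (b / a)) := by
      refine hCS.trans ?_
      rw [h2, ENNReal.ofReal_mul hA2]
      exact mul_le_mul' h1 le_rfl
    have hsq : (∫ x in Ioc a b, |pdr γ τ x|) ^ 2 ≤ A ^ 2 * Real.log (b / a) :=
      (ENNReal.ofReal_le_ofReal_iff (by positivity)).1 hkey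
    have hlogle : Real.log (b / a) ≤ L := by
      rw [hL]
      exact Real.log_le_log (by positivity) (div_le_div₀ hr.le hbr hq hqa)
    calc (γ τ b - γ τ a) ^ 2 = |γ τ b - γ τ a| ^ 2 := (sq_abs _).symm
      _ ≤ (∫ x in Ioc a b, |pdr γ τ x|) ^ 2 := by
          exact pow_le_pow_left₀ (abs_nonneg _) habs 2
      _ ≤ A ^ 2 * Real.log (b / a) := hsq
      _ ≤ A ^ 2 * L := by nlinarith
  -- temporal estimate at a fixed radius
  have temporal : ∀ ρ : ℝ, 0 < ρ →
      ENNReal.ofReal ((γ t ρ - γ s ρ) ^ 2)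
        ≤ (∫⁻ τ in uIoc s t, ENNReal.ofReal ((pdt γ τ ρ) ^ 2)) * ENNReal.ofReal |t - s| := by
    intro ρ hρ
    have hc : ContinuousOn (fun τ => pdt γ τ ρ) (uIcc s t) :=
      hptc.comp ((continuous_id.prodMk continuous_const).continuousOn)
        (fun τ _ => ⟨trivial, hρ⟩)
    have hint : IntervalIntegrable (fun τ => pdt γ τ ρ) volume s t := hc.intervalIntegrable
    have hftc : ∫ τ in s..t, pdt γ τ ρ = γ t ρ - γ s ρ :=
      intervalIntegral.integral_eq_sub_of_hasDerivAt (fun τ _ => hptD τ ρ hρ) hint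
    have habs : |γ t ρ - γ s ρ| ≤ ∫ τ in uIoc s t, |pdt γ τ ρ| := by
      rw [← hftc]
      simpa [Real.norm_eq_abs] using intervalIntegral.norm_integral_le_integral_norm_uIoc
        (f := fun τ => pdt γ τ ρ) (a := s) (b := t) (μ := volume)
    have hfiOn : IntegrableOn (fun τ => pdt γ τ ρ) (uIoc s t) := intervalIntegrable_iff.1 hint
    have hfm : AEMeasurable (fun τ => pdt γ τ ρ) (volume.restrict (uIoc s t)) :=
      (hc.mono uIoc_subset_uIcc).aemeasurable measurableSet_uIoc
    have hCS := sq_setIntegral_abs_le (w := fun _ => (1:ℝ)) measurableSet_uIoc hfiOn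
      (fun x _ => one_pos) hfm aemeasurable_const
    have h2 : (∫⁻ τ in uIoc s t, ENNReal.ofReal ((1:ℝ))⁻¹) = ENNReal.ofReal |t - s| := by
      rw [inv_one, ENNReal.ofReal_one, setLIntegral_const, one_mul]
      rw [uIoc, Real.volume_Ioc, max_sub_min_eq_abs, abs_sub_comm]
    calc ENNReal.ofReal ((γ t ρ - γ s ρ) ^ 2)
        ≤ ENNReal.ofReal ((∫ τ in uIoc s t, |pdt γ τ ρ|) ^ 2) := by
          refine ENNReal.ofReal_le_ofReal ?_
          rw [← sq_abs (γ t ρ - γ s ρ)]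
          exact pow_le_pow_left₀ (abs_nonneg _) habs 2
      _ ≤ (∫⁻ τ in uIoc s t, ENNReal.ofReal ((pdt γ τ ρ) ^ 2 * 1))
            * (∫⁻ τ in uIoc s t, ENNReal.ofReal ((1:ℝ))⁻¹) := hCS
      _ = (∫⁻ τ in uIoc s t, ENNReal.ofReal ((pdt γ τ ρ) ^ 2)) * ENNReal.ofReal |t - s| := by
          rw [h2]; simp [mul_one]
  -- averaging over ρ ∈ (q, r]
  have hmeas : AEMeasurable (Function.uncurry fun ρ τ => ENNReal.ofReal ((pdt γ τ ρ) ^ 2))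
      ((volume.restrict (Ioc q r)).prod (volume.restrict (uIoc s t))) := by
    have hcont : ContinuousOn (fun z : ℝ × ℝ => (pdt γ z.2 z.1) ^ 2) (Ioc q r ×ˢ uIoc s t) := by
      have h := hptc.comp continuous_swap.continuousOn
        (fun z (hz : z ∈ Ioc q r ×ˢ uIoc s t) => ⟨trivial, hq.trans hz.1.1⟩)
      exact h.pow 2
    rw [Measure.prod_restrict]
    exact (hcont.aemeasurable (measurableSet_Ioc.prod measurableSet_uIoc)).ennreal_ofReal
  have hswap : (∫⁻ ρ in Ioc q r, ∫⁻ τ in uIoc s t, ENNReal.ofReal ((pdt γ τ ρ) ^ 2))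
      = ∫⁻ τ in uIoc s t, ∫⁻ ρ in Ioc q r, ENNReal.ofReal ((pdt γ τ ρ) ^ 2) :=
    lintegral_lintegral_swap hmeas
  have hinner : ∀ τ : ℝ, (∫⁻ ρ in Ioc q r, ENNReal.ofReal ((pdt γ τ ρ) ^ 2))
      ≤ ENNReal.ofReal (A ^ 2 / q) := by
    intro τ
    have step : (∫⁻ ρ in Ioc q r, ENNReal.ofReal ((pdt γ τ ρ) ^ 2))
        ≤ ∫⁻ ρ in Ioc q r, ENNReal.ofReal q⁻¹
            * ENNReal.ofReal (((pdr γ τ ρ) ^ 2 + (pdt γ τ ρ) ^ 2) * ρ) := by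
      refine lintegral_mono_ae ((ae_restrict_iff' measurableSet_Ioc).2
        (Filter.Eventually.of_forall ?_))
      intro ρ hρ
      have h1 : q ≤ ρ := hρ.1.le
      have h2 : 0 < ρ := hq.trans_le h1
      rw [← ENNReal.ofReal_mul (by positivity)]
      refine ENNReal.ofReal_le_ofReal ?_
      have hkey : (pdt γ τ ρ) ^ 2 * q ≤ ((pdr γ τ ρ) ^ 2 + (pdt γ τ ρ) ^ 2) * ρ := by
        nlinarith [sq_nonneg (pdr γ τ ρ), sq_nonneg (pdt γ τ ρ)]
      calc (pdt γ τ ρ) ^ 2 = q⁻¹ * ((pdt γ τ ρ) ^ 2 * q) := by field_simp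
        _ ≤ q⁻¹ * (((pdr γ τ ρ) ^ 2 + (pdt γ τ ρ) ^ 2) * ρ) :=
            mul_le_mul_of_nonneg_left hkey (by positivity)
    rw [lintegral_const_mul' _ _ ENNReal.ofReal_ne_top] at step
    refine step.trans ?_
    have hIocIoi : Ioc q r ⊆ Ioi (0:ℝ) := fun x hx => hq.trans hx.1
    have hb : (∫⁻ ρ in Ioc q r, ENNReal.ofReal (((pdr γ τ ρ) ^ 2 + (pdt γ τ ρ) ^ 2) * ρ))
        ≤ ENNReal.ofReal (A ^ 2) := le_trans (lintegral_mono_set hIocIoi) (hA τ)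
    calc ENNReal.ofReal q⁻¹ * _ ≤ ENNReal.ofReal q⁻¹ * ENNReal.ofReal (A ^ 2) :=
          mul_le_mul' le_rfl hb
      _ = ENNReal.ofReal (A ^ 2 / q) := by
          rw [← ENNReal.ofReal_mul (by positivity)]
          congr 1
          field_simp
  have hg : (∫⁻ ρ in Ioc q r, ENNReal.ofReal ((γ t ρ - γ s ρ) ^ 2))
      ≤ ENNReal.ofReal ((t - s) ^ 2 * A ^ 2 / q) := by
    calc (∫⁻ ρ in Ioc q r, ENNReal.ofReal ((γ t ρ - γ s ρ) ^ 2))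
        ≤ ∫⁻ ρ in Ioc q r, (∫⁻ τ in uIoc s t, ENNReal.ofReal ((pdt γ τ ρ) ^ 2))
            * ENNReal.ofReal |t - s| := by
          refine lintegral_mono_ae ((ae_restrict_iff' measurableSet_Ioc).2
            (Filter.Eventually.of_forall ?_))
          exact fun ρ hρ => temporal ρ (hq.trans hρ.1)
      _ = (∫⁻ ρ in Ioc q r, ∫⁻ τ in uIoc s t, ENNReal.ofReal ((pdt γ τ ρ) ^ 2))
            * ENNReal.ofReal |t - s| :=
          lintegral_mul_const' _ _ ENNReal.ofReal_ne_top
      _ ≤ (∫⁻ τ in uIoc s t, ENNReal.ofReal (A ^ 2 / q)) * ENNReal.ofReal |t - s| := by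
          rw [hswap]
          exact mul_le_mul' (lintegral_mono fun τ => hinner τ) le_rfl
      _ = ENNReal.ofReal (A ^ 2 / q) * ENNReal.ofReal |t - s| * ENNReal.ofReal |t - s| := by
          rw [setLIntegral_const, uIoc, Real.volume_Ioc, max_sub_min_eq_abs, abs_sub_comm]
      _ = ENNReal.ofReal ((t - s) ^ 2 * A ^ 2 / q) := by
          rw [← ENNReal.ofReal_mul (by positivity), ← ENNReal.ofReal_mul (by positivity)]
          congr 1
          rw [show A ^ 2 / q * |t - s| * |t - s| = (|t - s| * |t - s|) * A ^ 2 / q by ring,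
            ← sq (|t - s|), sq_abs]
  set V : ℝ := (t - s) ^ 2 * A ^ 2 / q with hV
  have hV0 : 0 ≤ V := by positivity
  have hexists : ∃ ρ ∈ Ioc q r, (γ t ρ - γ s ρ) ^ 2 ≤ 2 * V / (r - q) := by
    by_contra hcon
    push_neg at hcon
    have hlow : ENNReal.ofReal (2 * V / (r - q)) * ENNReal.ofReal (r - q)
        ≤ ENNReal.ofReal V := by
      have hstep : ENNReal.ofReal (2 * V / (r - q)) * volume (Ioc q r)
          ≤ ∫⁻ ρ in Ioc q r, ENNReal.ofReal ((γ t ρ - γ s ρ) ^ 2) := by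
        rw [← setLIntegral_const]
        refine lintegral_mono_ae ((ae_restrict_iff' measurableSet_Ioc).2
          (Filter.Eventually.of_forall ?_))
        exact fun ρ hρ => ENNReal.ofReal_le_ofReal (hcon ρ hρ).le
      rw [Real.volume_Ioc] at hstep
      exact hstep.trans hg
    rw [← ENNReal.ofReal_mul (by positivity), div_mul_cancel₀ _ (ne_of_gt hrq)] at hlow
    have h2V : 2 * V ≤ V := (ENNReal.ofReal_le_ofReal_iff hV0).1 hlow
    have hVz : V = 0 := by linarith
    have hgz : (∫⁻ ρ in Ioc q r, ENNReal.ofReal ((γ t ρ - γ s ρ) ^ 2)) = 0 :=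
      le_antisymm (by simpa [hVz] using hg) zero_le
    have hγc : ContinuousOn F (univ ×ˢ Ioi 0) := hγ.continuousOn
    have hslice : ∀ τ : ℝ, ContinuousOn (fun ρ => γ τ ρ) (Ioc q r) := fun τ =>
      (hγc.comp ((continuous_const.prodMk continuous_id).continuousOn)
        (fun x (hx : x ∈ Ioc q r) => ⟨trivial, hq.trans hx.1⟩))
    have hgm : AEMeasurable (fun ρ => ENNReal.ofReal ((γ t ρ - γ s ρ) ^ 2))
        (volume.restrict (Ioc q r)) :=
      ((((hslice t).sub (hslice s)).pow 2).aemeasurable measurableSet_Ioc).ennreal_ofReal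
    have hae := (lintegral_eq_zero_iff' hgm).1 hgz
    have hne : volume.restrict (Ioc q r) ≠ 0 := by
      intro h0
      have h1 : volume.restrict (Ioc q r) univ = 0 := by rw [h0]; rfl
      rw [Measure.restrict_apply_univ, Real.volume_Ioc, ENNReal.ofReal_eq_zero] at h1
      linarith
    haveI : (ae (volume.restrict (Ioc q r))).NeBot := ae_neBot.2 hne
    obtain ⟨ρ, hρ0, hρmem⟩ := (hae.and (ae_restrict_mem measurableSet_Ioc)).exists
    have hlt := hcon ρ hρmem
    have hz : (γ t ρ - γ s ρ) ^ 2 ≤ 0 := by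
      simpa [ENNReal.ofReal_eq_zero] using hρ0
    rw [hVz] at hlt
    simp only [mul_zero, zero_div] at hlt
    linarith
  obtain ⟨ρ, hρ, hvineq⟩ := hexists
  have hu := radial t ρ r hρ.1.le hρ.2 le_rfl
  have hw := radial s q ρ le_rfl hρ.1.le hρ.2
  have hvY : (γ t ρ - γ s ρ) ^ 2 ≤ 2 * Y * A ^ 2 := by
    refine hvineq.trans (le_of_eq ?_)
    rw [hV, hY]
    field_simp
  have hdecomp : γ t r - γ s q
      = (γ t r - γ t ρ) + (γ t ρ - γ s ρ) + (γ s ρ - γ s q) := by ring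
  rw [hdecomp]
  nlinarith [sq_nonneg ((γ t r - γ t ρ) - (γ t ρ - γ s ρ)),
    sq_nonneg ((γ t ρ - γ s ρ) - (γ s ρ - γ s q)),
    sq_nonneg ((γ t r - γ t ρ) - (γ s ρ - γ s q)), hu, hw, hvY, hL0, hY0, hA2]
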